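/- If n and k are positive integers with 2 ≤ k ≤ n/2 and gcd(C(n,k), n−1) > 1, then C(n,k) has at least two distinct prime factors. -/

import Mathlib

theorem gcd_pred_two_prime_factors (n k : ℕ) (hn : 0 < n) (hk : 0 < k)
    (h2 : 2 ≤ k) (hkn : k ≤ n / 2) (hgcd : 1 < Nat.gcd (n.choose k) (n - 1)) :
    2 ≤ (n.choose k).primeFactors.card := by
  have hk_le_n : k ≤ n := le_trans hkn (Nat.div_le_self n 2)
  have hC : n.choose k ≠ 0 := (Nat.choose_pos hk_le_n).ne'
  -- prime p dividing both choose and n-1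
  obtain ⟨p, hp, hpd⟩ := Nat.exists_prime_and_dvd (by omega : Nat.gcd (n.choose k) (n - 1) ≠ 1)
  have hpC : p ∣ n.choose k := hpd.trans (Nat.gcd_dvd_left _ _)
  have hpn1 : p ∣ n - 1 := hpd.trans (Nat.gcd_dvd_right _ _)
  -- key identity: k * C(n,k) = n * C(n-1,k-1)
  have key : k * n.choose k = n * (n - 1).choose (k - 1) := by
    have := Nat.add_one_mul_choose_eq (n - 1) (k - 1)
    have hn1 : n - 1 + 1 = n := by omega
    have hk1 : k - 1 + 1 = k := by omega
    rw [hn1, hk1] at this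
    linarith [this]
  set d := Nat.gcd n k with hd
  have hd0 : 0 < d := Nat.gcd_pos_of_pos_left _ hn
  have hdn : d ∣ n := Nat.gcd_dvd_left _ _
  have hdk : d ∣ k := Nat.gcd_dvd_right _ _
  have hcop : Nat.Coprime (n / d) (k / d) := Nat.coprime_div_gcd_div_gcd hd0
  have key2 : (k / d) * n.choose k = (n / d) * (n - 1).choose (k - 1) := by
    apply Nat.eq_of_mul_eq_mul_left hd0
    calc d * (k / d * n.choose k) = (d * (k / d)) * n.choose k := by ring
      _ = k * n.choose k := by rw [Nat.mul_div_cancel' hdk]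
      _ = n * (n - 1).choose (k - 1) := key
      _ = (d * (n / d)) * (n - 1).choose (k - 1) := by rw [Nat.mul_div_cancel' hdn]
      _ = d * (n / d * (n - 1).choose (k - 1)) := by ring
  have hdvd : (n / d) ∣ n.choose k := by
    have : (n / d) ∣ (k / d) * n.choose k := Dvd.intro _ key2.symm
    exact (Nat.Coprime.dvd_of_dvd_mul_left hcop this)
  have hnd2 : n / d ≠ 1 ∧ n / d ≠ 0 := by
    constructor
    · have hdle : d ≤ k := Nat.le_of_dvd hk hdk
      have : 2 * d ≤ n := by omega
      have := Nat.le_div_iff_mul_le hd0 |>.mpr (by omega : 2 * d ≤ n)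
      omega
    · have := Nat.div_pos (Nat.le_of_dvd hn hdn) hd0
      omega
  obtain ⟨q, hq, hqd⟩ := Nat.exists_prime_and_dvd hnd2.1
  have hqC : q ∣ n.choose k := hqd.trans hdvd
  have hqn : q ∣ n := hqd.trans (Nat.div_dvd_of_dvd hdn)
  have hpq : p ≠ q := by
    rintro rfl
    have : p ∣ n - (n - 1) := Nat.dvd_sub hqn hpn1
    have hn4 : 4 ≤ n := by
      have := Nat.le_div_iff_mul_le (by norm_num : 0 < 2) |>.mp hkn
      omega
    have : p ∣ 1 := by
      have h1 : n - (n - 1) = 1 := by omega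
      rwa [h1] at this
    have := Nat.eq_one_of_dvd_one this
    have := hp.two_le
    omega
  have hsub : ({p, q} : Finset ℕ) ⊆ (n.choose k).primeFactors := by
    intro x hx
    simp only [Finset.mem_insert, Finset.mem_singleton] at hx
    rcases hx with rfl | rfl
    · exact Nat.mem_primeFactors.mpr ⟨hp, hpC, hC⟩
    · exact Nat.mem_primeFactors.mpr ⟨hq, hqC, hC⟩
  calc 2 = ({p, q} : Finset ℕ).card := (Finset.card_pair hpq).symm
    _ ≤ _ := Finset.card_le_card hsub
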